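/- Let n > 2, 0 ≤ m < 2 and t > 0. With ψ as defined by ψ(x) = (1/Γ((n-m)/2)) ∫₀^∞ (1 - (w/(1+w))^(n/2-1)) w^(-m/2) e^(-xw) dw, the limit lim_{x↓0} x^(1-m/2) (2t)^(-(n-m)/2) ψ(x/(2t)) = 0 holds. -/

import Mathlib

open MeasureTheory Real Filter

lemma psi_aux_bound (p δ w : ℝ) (hp : 0 < p) (hδ0 : 0 < δ) (hδ1 : δ ≤ 1) (hw : 0 < w) :
    1 - (w / (1 + w)) ^ p ≤ (max p 1) ^ δ * w ^ (-δ) := by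
  set P := max p 1 with hPdef
  have hP1 : 1 ≤ P := le_max_right _ _
  have hw1 : (0:ℝ) < 1 + w := by linarith
  have hr0 : 0 < w / (1 + w) := div_pos hw hw1
  have hr1 : w / (1 + w) < 1 := (div_lt_one hw1).2 (by linarith)
  have h1 : 1 - (w / (1 + w)) ^ p ≤ P * (1 - w / (1 + w)) := by
    rcases le_or_gt 1 p with h | h
    · have hb := one_add_mul_self_le_rpow_one_add (s := w / (1 + w) - 1) (by linarith) h
      have he : (1 + (w / (1 + w) - 1)) = w / (1 + w) := by ring
      rw [he] at hb
      have hPp : p ≤ P := le_max_left _ _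
      nlinarith [hr1.le, hr0.le]
    · have hle : w / (1 + w) ≤ (w / (1 + w)) ^ p := by
        calc w / (1 + w) = (w / (1 + w)) ^ (1 : ℝ) := (Real.rpow_one _).symm
          _ ≤ (w / (1 + w)) ^ p := Real.rpow_le_rpow_of_exponent_ge hr0 hr1.le h.le
      nlinarith [hr1.le]
  have h1r : 1 - w / (1 + w) = 1 / (1 + w) := by field_simp; ring
  have h2 : 1 - (w / (1 + w)) ^ p ≤ min 1 (P / w) := by
    refine le_min ?_ ?_
    · have : 0 ≤ (w / (1 + w)) ^ p := Real.rpow_nonneg hr0.le p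
      linarith
    · calc 1 - (w / (1 + w)) ^ p ≤ P * (1 / (1 + w)) := by rw [← h1r]; exact h1
        _ = P / (1 + w) := by rw [mul_one_div]
        _ ≤ P / w := by gcongr <;> linarith
  have h3 : min 1 (P / w) ≤ (P / w) ^ δ := by
    have ha0 : 0 < P / w := div_pos (by linarith) hw
    rcases le_or_gt (P / w) 1 with h | h
    · calc min 1 (P / w) ≤ P / w := min_le_right _ _
        _ = (P / w) ^ (1 : ℝ) := (Real.rpow_one _).symm
        _ ≤ (P / w) ^ δ := Real.rpow_le_rpow_of_exponent_ge ha0 h hδ1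
    · calc min 1 (P / w) ≤ 1 := min_le_left _ _
        _ ≤ (P / w) ^ δ := Real.one_le_rpow h.le hδ0.le
  have h4 : (P / w) ^ δ = P ^ δ * w ^ (-δ) := by
    rw [Real.div_rpow (by linarith) hw.le, Real.rpow_neg hw.le, div_eq_mul_inv]
  exact ((h2.trans h3).trans_eq h4)

theorem psi_term_vanishes (n m t : ℝ) (hn : 2 < n) (hm0 : 0 ≤ m) (hm2 : m < 2) (ht : 0 < t)
    (ψ : ℝ → ℝ)
    (hψ : ∀ u : ℝ, ψ u = (1 / Real.Gamma ((n - m) / 2)) *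
      ∫ w in Set.Ioi (0:ℝ),
        (1 - (w / (1 + w)) ^ (n / 2 - 1)) * w ^ (-m / 2) * Real.exp (-u * w)) :
    Tendsto (fun x : ℝ => x ^ (1 - m / 2) * (2 * t) ^ (-((n - m) / 2)) * ψ (x / (2 * t)))
      (nhdsWithin 0 (Set.Ioi 0)) (nhds 0) := by
  set δ : ℝ := (2 - m) / 4 with hδdef
  have hδ0 : 0 < δ := by rw [hδdef]; linarith
  have hδ1 : δ ≤ 1 := by rw [hδdef]; linarith
  set p : ℝ := n / 2 - 1 with hpdef
  have hp : 0 < p := by rw [hpdef]; linarith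
  set P : ℝ := max p 1 with hPdef
  have hP1 : (1:ℝ) ≤ P := le_max_right _ _
  have hΓpos : 0 < Real.Gamma ((n - m) / 2) := Real.Gamma_pos_of_pos (by linarith)
  have hc : (0:ℝ) < 2 * t := by linarith
  -- nonnegativity of ψ
  have hψnn : ∀ u : ℝ, 0 ≤ ψ u := by
    intro u
    rw [hψ u]
    refine mul_nonneg (by positivity) (setIntegral_nonneg measurableSet_Ioi fun w hw => ?_)
    have hw : 0 < w := hw
    have hw1 : (0:ℝ) < 1 + w := by linarith
    have hr1 : w / (1 + w) ≤ 1 := le_of_lt ((div_lt_one hw1).2 (by linarith))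
    have : (w / (1 + w)) ^ p ≤ 1 :=
      Real.rpow_le_one (le_of_lt (div_pos hw hw1)) hr1 hp.le
    have h1 : 0 ≤ 1 - (w / (1 + w)) ^ p := by linarith
    exact mul_nonneg (mul_nonneg h1 (Real.rpow_nonneg hw.le _)) (Real.exp_pos _).le
  -- key bound on ψ
  have hmain : ∀ u : ℝ, 0 < u →
      ψ u ≤ (1 / Real.Gamma ((n - m) / 2)) * (P ^ δ * ((1 / u) ^ δ * Real.Gamma δ)) := by
    intro u hu
    rw [hψ u]
    have hInt : IntegrableOn (fun w : ℝ => w ^ (δ - 1) * Real.exp (-(u * w))) (Set.Ioi 0) := by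
      have h := integrableOn_rpow_mul_exp_neg_mul_rpow (s := δ - 1) (p := 1) (b := u)
        (by linarith) one_pos hu
      refine h.congr_fun (fun x hx => ?_) measurableSet_Ioi
      simp [Real.rpow_one, neg_mul]
    have hval : ∫ w in Set.Ioi (0:ℝ), w ^ (δ - 1) * Real.exp (-(u * w))
        = (1 / u) ^ δ * Real.Gamma δ := integral_rpow_mul_exp_neg_mul_Ioi hδ0 hu
    have hptwise : ∀ w ∈ Set.Ioi (0:ℝ),
        (1 - (w / (1 + w)) ^ p) * w ^ (-m / 2) * Real.exp (-u * w)
          ≤ P ^ δ * (w ^ (δ - 1) * Real.exp (-(u * w))) := by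
      intro w hw
      have hw : (0:ℝ) < w := hw
      have haux := psi_aux_bound p δ w hp hδ0 hδ1 hw
      have hexp : 0 ≤ Real.exp (-u * w) := (Real.exp_pos _).le
      have hwm : 0 ≤ w ^ (-m / 2) := Real.rpow_nonneg hw.le _
      have step : (1 - (w / (1 + w)) ^ p) * w ^ (-m / 2) * Real.exp (-u * w)
          ≤ (P ^ δ * w ^ (-δ)) * w ^ (-m / 2) * Real.exp (-u * w) := by
        have := mul_le_mul_of_nonneg_right haux hwm
        exact mul_le_mul_of_nonneg_right this hexp
      have heq : (P ^ δ * w ^ (-δ)) * w ^ (-m / 2) * Real.exp (-u * w)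
          = P ^ δ * (w ^ (δ - 1) * Real.exp (-(u * w))) := by
        rw [mul_assoc (P ^ δ), ← Real.rpow_add hw]
        have : -δ + -m / 2 = δ - 1 := by rw [hδdef]; ring
        rw [this, neg_mul]
        ring
      exact step.trans_eq heq
    have hnn : ∀ w ∈ Set.Ioi (0:ℝ),
        0 ≤ (1 - (w / (1 + w)) ^ p) * w ^ (-m / 2) * Real.exp (-u * w) := by
      intro w hw
      have hw : (0:ℝ) < w := hw
      have hw1 : (0:ℝ) < 1 + w := by linarith
      have : (w / (1 + w)) ^ p ≤ 1 :=
        Real.rpow_le_one (le_of_lt (div_pos hw hw1)) (le_of_lt ((div_lt_one hw1).2 (by linarith))) hp.le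
      exact mul_nonneg (mul_nonneg (by linarith) (Real.rpow_nonneg hw.le _)) (Real.exp_pos _).le
    have hle : (∫ w in Set.Ioi (0:ℝ),
          (1 - (w / (1 + w)) ^ p) * w ^ (-m / 2) * Real.exp (-u * w))
        ≤ ∫ w in Set.Ioi (0:ℝ), P ^ δ * (w ^ (δ - 1) * Real.exp (-(u * w))) := by
      refine integral_mono_of_nonneg ?_ (hInt.const_mul _) ?_
      · exact (ae_restrict_iff' measurableSet_Ioi).2 (Eventually.of_forall hnn)
      · exact (ae_restrict_iff' measurableSet_Ioi).2 (Eventually.of_forall hptwise)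
    have hval2 : ∫ w in Set.Ioi (0:ℝ), P ^ δ * (w ^ (δ - 1) * Real.exp (-(u * w)))
        = P ^ δ * ((1 / u) ^ δ * Real.Gamma δ) := by
      rw [MeasureTheory.integral_const_mul, hval]
    rw [← hval2]
    exact mul_le_mul_of_nonneg_left hle (by positivity)
  -- squeeze
  set C : ℝ := (2 * t) ^ (-((n - m) / 2)) *
      ((1 / Real.Gamma ((n - m) / 2)) * (P ^ δ * Real.Gamma δ)) * (2 * t) ^ δ with hCdef
  have hbound : ∀ x ∈ Set.Ioi (0:ℝ),
      x ^ (1 - m / 2) * (2 * t) ^ (-((n - m) / 2)) * ψ (x / (2 * t)) ≤ C * x ^ δ := by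
    intro x hx
    have hx : (0:ℝ) < x := hx
    have hu : 0 < x / (2 * t) := div_pos hx hc
    have h1 := hmain _ hu
    have hinv : (1 / (x / (2 * t))) ^ δ = (2 * t) ^ δ * x ^ (-δ) := by
      rw [one_div_div, Real.div_rpow hc.le hx.le, Real.rpow_neg hx.le, div_eq_mul_inv]
    rw [hinv] at h1
    have hxx : x ^ (1 - m / 2) * x ^ (-δ) = x ^ δ := by
      rw [← Real.rpow_add hx]
      congr 1
      rw [hδdef]; ring
    have h2 : x ^ (1 - m / 2) * (2 * t) ^ (-((n - m) / 2)) * ψ (x / (2 * t))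
        ≤ x ^ (1 - m / 2) * (2 * t) ^ (-((n - m) / 2)) *
          ((1 / Real.Gamma ((n - m) / 2)) * (P ^ δ * ((2 * t) ^ δ * x ^ (-δ) * Real.Gamma δ))) :=
      mul_le_mul_of_nonneg_left h1 (by positivity)
    have h3 : x ^ (1 - m / 2) * (2 * t) ^ (-((n - m) / 2)) *
          ((1 / Real.Gamma ((n - m) / 2)) * (P ^ δ * ((2 * t) ^ δ * x ^ (-δ) * Real.Gamma δ)))
        = C * (x ^ (1 - m / 2) * x ^ (-δ)) := by
      rw [hCdef]; ring
    rw [h3, hxx] at h2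
    exact h2
  refine squeeze_zero' (g := fun x => C * x ^ δ) ?_ ?_ ?_
  · filter_upwards [self_mem_nhdsWithin] with x hx
    have hx : (0:ℝ) < x := hx
    exact mul_nonneg (by positivity) (hψnn _)
  · filter_upwards [self_mem_nhdsWithin] with x hx
    exact hbound x hx
  · have h := (Real.continuousAt_rpow_const 0 δ (Or.inr hδ0.le)).tendsto
    rw [Real.zero_rpow hδ0.ne'] at h
    have h2 := (h.mono_left (nhdsWithin_le_nhds (s := Set.Ioi (0:ℝ)))).const_mul C
    simpa using h2
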